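/- Let k be a field and A an integral domain that is a k-algebra equipped with an iterative higher derivation ∂ = {∂^(i)}_{i≥0} (satisfying ∂^(0)=id, the Leibniz rule, and iterativity). Then the kernel ker(∂) = ∩_{i≥1} ker(∂^(i)) is a factorially closed subring of A: if a, b ∈ A are nonzero and a·b ∈ ker(∂), then a ∈ ker(∂) and b ∈ ker(∂). -/

import Mathlib

open Classical in
/-- Helper: top-degree extraction. -/
theorem stmt1_aux (k : Type*) [Field k] (A : Type*) [CommRing A] [IsDomain A] [Algebra k A]
    (D : ℕ → A →ₗ[k] A) (h0 : D 0 = LinearMap.id)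
    (a : A) (ha : a ≠ 0) (N : ℕ) (hN : ∀ j ≥ N, D j a = 0) :
    ∃ m : ℕ, D m a ≠ 0 ∧ ∀ j > m, D j a = 0 := by
  refine ⟨Nat.findGreatest (fun j => D j a ≠ 0) N, ?_, ?_⟩
  · exact Nat.findGreatest_spec (P := fun j => D j a ≠ 0) (Nat.zero_le N)
      (by simpa [h0] using ha)
  · intro j hj
    by_cases hjN : j ≤ N
    · have := Nat.findGreatest_is_greatest (P := fun j => D j a ≠ 0) hj hjN
      simpa using this
    · exact hN j (le_of_not_ge hjN)

/-- The kernel of a locally finite iterative higher derivation on a domain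
is a factorially closed subring: if `a·b` is in the kernel with `a, b ≠ 0`, then both
`a` and `b` are in the kernel. -/
theorem stmt1 (k : Type*) [Field k] (A : Type*) [CommRing A] [IsDomain A] [Algebra k A]
    (D : ℕ → A →ₗ[k] A)
    (h0 : D 0 = LinearMap.id)
    (hLeibniz : ∀ (i : ℕ) (x y : A),
      D i (x * y) = ∑ p ∈ Finset.HasAntidiagonal.antidiagonal i, D p.1 x * D p.2 y)
    (hIter : ∀ u v : ℕ, (D u) ∘ₗ (D v) = ((u + v).choose u) • D (u + v))
    (hLocFin : ∀ x : A, ∃ N : ℕ, ∀ j ≥ N, D j x = 0)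
    (a b : A) (ha : a ≠ 0) (hb : b ≠ 0)
    (hab : ∀ i : ℕ, 1 ≤ i → D i (a * b) = 0) :
    (∀ i : ℕ, 1 ≤ i → D i a = 0) ∧ (∀ i : ℕ, 1 ≤ i → D i b = 0) := by
  obtain ⟨Na, hNa⟩ := hLocFin a
  obtain ⟨Nb, hNb⟩ := hLocFin b
  obtain ⟨m, hm, hm'⟩ := stmt1_aux k A D h0 a ha Na hNa
  obtain ⟨n, hn, hn'⟩ := stmt1_aux k A D h0 b hb Nb hNb
  have key : D (m + n) (a * b) = D m a * D n b := by
    rw [hLeibniz]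
    refine Finset.sum_eq_single (m, n) ?_ ?_
    · rintro ⟨p, q⟩ hpq hne
      rw [Finset.HasAntidiagonal.mem_antidiagonal] at hpq
      rcases lt_or_ge m p with h | h
      · rw [hm' p h, zero_mul]
      · have : n < q := by
          by_contra hq
          push_neg at hq
          exact hne (by
            have : p = m ∧ q = n := by omega
            simp [this.1, this.2])
        rw [hn' q this, mul_zero]
    · intro h
      simp [Finset.HasAntidiagonal.mem_antidiagonal] at h
  have hmn : m = 0 ∧ n = 0 := by
    by_contra h
    have h1 : 1 ≤ m + n := by omega
    have := hab (m + n) h1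
    rw [key] at this
    rcases mul_eq_zero.mp this with h | h
    · exact hm h
    · exact hn h
  constructor
  · intro i hi; exact hm' i (by omega)
  · intro i hi; exact hn' i (by omega)
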